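/- Let A be an n×n real symmetric positive definite matrix, and let Ψ = [ψ_1,…,ψ_N] be an n×N real matrix with linearly independent columns such that A_st = ΨᵀAΨ satisfies ‖A_st⁻¹‖₂ ≤ ‖A⁻¹‖₂ and such that ‖x − P^A_Ψ x‖_A ≤ ε‖Ax‖₂ for all x ∈ ℝⁿ, for some ε > 0. Let Ψ̃ = [ψ̃_1,…,ψ̃_N] be an n×N matrix with ‖ψ_i − ψ̃_i‖_A ≤ Cε/√N for all 1 ≤ i ≤ N, for some constant C ≥ 0. Then: (1) for every x ∈ ℝⁿ with b = Ax, ‖x − P^A_{Ψ̃} x‖_A ≤ (1 + C‖A⁻¹‖₂) ε ‖b‖₂; (2) for every x ∈ ℝⁿ with b = Ax, ‖x − P^A_{Ψ̃} x‖₂ ≤ (1 + C‖A⁻¹‖₂)² ε² ‖b‖₂; (3) ‖A⁻¹ − P^A_{Ψ̃} A⁻¹‖₂ ≤ (1 + C‖A⁻¹‖₂)² ε². -/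

import Mathlib

open Matrix BigOperators

noncomputable section

/-- Euclidean norm of a vector. -/
def norm2 {ι : Type} [Fintype ι] (x : ι → ℝ) : ℝ := Real.sqrt (x ⬝ᵥ x)

/-- `A`-energy norm of a vector: `‖x‖_A = √(xᵀ A x)`. -/
def normA {ι : Type} [Fintype ι] (A : Matrix ι ι ℝ) (x : ι → ℝ) : ℝ :=
  Real.sqrt (x ⬝ᵥ A.mulVec x)

/-- Spectral (ℓ²-operator) norm of a square real matrix. -/
def specNorm {ι : Type} [Fintype ι] [DecidableEq ι] (B : Matrix ι ι ℝ) : ℝ :=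
  ‖Matrix.toEuclideanCLM (𝕜 := ℝ) B‖

/-- Smallest value of the Rayleigh quotient; for a symmetric matrix this is the
smallest eigenvalue. -/
def lamMin {ι : Type} [Fintype ι] (B : Matrix ι ι ℝ) : ℝ :=
  sInf {r : ℝ | ∃ x : ι → ℝ, x ⬝ᵥ x = 1 ∧ r = x ⬝ᵥ B.mulVec x}

/-- Largest value of the Rayleigh quotient; for a symmetric matrix this is the
largest eigenvalue. -/
def lamMax {ι : Type} [Fintype ι] (B : Matrix ι ι ℝ) : ℝ :=
  sSup {r : ℝ | ∃ x : ι → ℝ, x ⬝ᵥ x = 1 ∧ r = x ⬝ᵥ B.mulVec x}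

namespace LocHelper
open Matrix

variable {m : ℕ}

lemma dot_self_nonneg (v : Fin m → ℝ) : 0 ≤ v ⬝ᵥ v :=
  Finset.sum_nonneg fun i _ => mul_self_nonneg _

lemma norm2_nonneg (v : Fin m → ℝ) : 0 ≤ norm2 v := Real.sqrt_nonneg _

lemma sq_norm2 (v : Fin m → ℝ) : norm2 v ^ 2 = v ⬝ᵥ v := Real.sq_sqrt (dot_self_nonneg v)

lemma norm2_sq_eq (v : Fin m → ℝ) : v ⬝ᵥ v = norm2 v * norm2 v := by
  rw [← sq_norm2 v]; ring

lemma dot_le_norm2 (v w : Fin m → ℝ) : v ⬝ᵥ w ≤ norm2 v * norm2 w := by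
  have h := Real.sum_mul_le_sqrt_mul_sqrt Finset.univ v w
  simp only [pow_two] at h
  simpa [dotProduct, norm2] using h

lemma norm2_neg (v : Fin m → ℝ) : norm2 (-v) = norm2 v := by
  simp [norm2, neg_dotProduct, dotProduct_neg]

lemma neg_dot_le_norm2 (v w : Fin m → ℝ) : -(norm2 v * norm2 w) ≤ v ⬝ᵥ w := by
  have h := dot_le_norm2 (-v) w
  rw [neg_dotProduct, norm2_neg] at h
  linarith

def toEuc (v : Fin m → ℝ) : EuclideanSpace ℝ (Fin m) := (WithLp.equiv 2 _).symm v

lemma norm2_eq (v : Fin m → ℝ) : norm2 v = ‖toEuc v‖ := by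
  rw [EuclideanSpace.norm_eq]
  simp [norm2, dotProduct, toEuc, Real.norm_eq_abs, pow_two, abs_mul_abs_self]

lemma norm2_add_le (u v : Fin m → ℝ) : norm2 (u + v) ≤ norm2 u + norm2 v := by
  have : toEuc (u + v) = toEuc u + toEuc v := rfl
  rw [norm2_eq, norm2_eq, norm2_eq, this]; exact norm_add_le _ _

lemma norm2_smul (a : ℝ) (v : Fin m → ℝ) : norm2 (a • v) = |a| * norm2 v := by
  have : toEuc (a • v) = a • toEuc v := rfl
  rw [norm2_eq, norm2_eq, this, norm_smul, Real.norm_eq_abs]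

lemma norm2_sum_le {ι : Type*} (s : Finset ι) (f : ι → Fin m → ℝ) :
    norm2 (∑ j ∈ s, f j) ≤ ∑ j ∈ s, norm2 (f j) := by
  have : toEuc (∑ j ∈ s, f j) = ∑ j ∈ s, toEuc (f j) := map_sum (WithLp.addEquiv 2 (Fin m → ℝ)).symm f s
  rw [norm2_eq, this]
  exact (norm_sum_le _ _).trans (le_of_eq (by simp [norm2_eq]))

lemma norm2_mulVec_le (M : Matrix (Fin m) (Fin m) ℝ) (v : Fin m → ℝ) :
    norm2 (M *ᵥ v) ≤ specNorm M * norm2 v := by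
  have h : toEuc (M *ᵥ v) = Matrix.toEuclideanCLM (𝕜 := ℝ) M (toEuc v) :=
    (Matrix.toEuclideanCLM_toLp M v).symm
  rw [norm2_eq, norm2_eq, h]
  exact (Matrix.toEuclideanCLM (𝕜 := ℝ) M).le_opNorm _

lemma specNorm_nonneg (M : Matrix (Fin m) (Fin m) ℝ) : 0 ≤ specNorm M := norm_nonneg _

lemma norm2_le_of_orth {u w : Fin m → ℝ} (h : u ⬝ᵥ w = 0) : norm2 u ≤ norm2 (u + w) := by
  unfold norm2
  apply Real.sqrt_le_sqrt
  have : (u + w) ⬝ᵥ (u + w) = u ⬝ᵥ u + 2 * (u ⬝ᵥ w) + w ⬝ᵥ w := by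
    simp [add_dotProduct, dotProduct_add, dotProduct_comm w u]; ring
  rw [this, h]
  have := dot_self_nonneg w
  linarith


variable {k : ℕ}

lemma dot_factor (B : Matrix (Fin m) (Fin m) ℝ) (x y : Fin m → ℝ) :
    x ⬝ᵥ (Bᵀ * B) *ᵥ y = (B *ᵥ x) ⬝ᵥ (B *ᵥ y) := by
  rw [← mulVec_mulVec, dotProduct_mulVec, vecMul_transpose]

lemma dot_transpose (M : Matrix (Fin m) (Fin k) ℝ) (c : Fin k → ℝ) (w : Fin m → ℝ) :
    c ⬝ᵥ (Mᵀ *ᵥ w) = (M *ᵥ c) ⬝ᵥ w := by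
  rw [dotProduct_mulVec, vecMul_transpose]

lemma star_pi (c : Fin k → ℝ) : star c = c := by
  funext i; simp

lemma posSemidef_dot_nonneg {M : Matrix (Fin k) (Fin k) ℝ} (hM : M.PosSemidef)
    (c : Fin k → ℝ) : 0 ≤ c ⬝ᵥ M *ᵥ c := by
  have := hM.dotProduct_mulVec_nonneg c
  rwa [star_pi] at this

lemma posDef_dot_pos {M : Matrix (Fin k) (Fin k) ℝ} (hM : M.PosDef)
    {c : Fin k → ℝ} (hc : c ≠ 0) : 0 < c ⬝ᵥ M *ᵥ c := by
  have := hM.dotProduct_mulVec_pos hc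
  rwa [star_pi] at this

lemma posDef_conj (A : Matrix (Fin m) (Fin m) ℝ) (hA : A.PosDef)
    (Ψ : Matrix (Fin m) (Fin k) ℝ)
    (hinj : ∀ c : Fin k → ℝ, Ψ *ᵥ c = 0 → c = 0) : (Ψᵀ * A * Ψ).PosDef := by
  refine Matrix.PosDef.of_dotProduct_mulVec_pos ?_ ?_
  · have := isHermitian_conjTranspose_mul_mul Ψ hA.1
    rwa [conjTranspose_eq_transpose_of_trivial] at this
  · intro c hc
    rw [star_pi]
    have h1 : c ⬝ᵥ (Ψᵀ * A * Ψ) *ᵥ c = (Ψ *ᵥ c) ⬝ᵥ A *ᵥ (Ψ *ᵥ c) := by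
      rw [Matrix.mul_assoc, ← mulVec_mulVec, dot_transpose, ← mulVec_mulVec]
    rw [h1]
    exact posDef_dot_pos hA (fun h => hc (hinj c h))

lemma dot_le_specNorm_inv_mul (M : Matrix (Fin k) (Fin k) ℝ) (hM : M.PosDef)
    (c : Fin k → ℝ) : c ⬝ᵥ c ≤ specNorm M⁻¹ * (c ⬝ᵥ M *ᵥ c) := by
  have hdet : IsUnit M.det := hM.det_pos.ne'.isUnit
  obtain ⟨D, hD⟩ := (by
    open scoped MatrixOrder in
    obtain ⟨D, hD⟩ := CStarAlgebra.nonneg_iff_eq_star_mul_self.mp hM.inv.posSemidef.nonneg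
    exact ⟨D, hD⟩ : ∃ D : Matrix (Fin k) (Fin k) ℝ, M⁻¹ = Dᴴ * D)
  rw [conjTranspose_eq_transpose_of_trivial] at hD
  set d := M *ᵥ c with hd
  have h1 : M⁻¹ *ᵥ d = c := by
    rw [hd, mulVec_mulVec, Matrix.nonsing_inv_mul _ hdet, one_mulVec]
  have hq : 0 ≤ c ⬝ᵥ M *ᵥ c := posSemidef_dot_nonneg hM.posSemidef c
  have hs : 0 ≤ specNorm M⁻¹ := specNorm_nonneg _
  -- c ⬝ᵥ c = (D c) ⬝ᵥ (D d)
  have h2 : c ⬝ᵥ c = (D *ᵥ c) ⬝ᵥ (D *ᵥ d) := by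
    calc c ⬝ᵥ c = c ⬝ᵥ M⁻¹ *ᵥ d := by rw [h1]
    _ = (D *ᵥ c) ⬝ᵥ (D *ᵥ d) := by rw [hD, dot_factor]
  have h3 : (norm2 (D *ᵥ c))^2 ≤ specNorm M⁻¹ * (c ⬝ᵥ c) := by
    rw [sq_norm2, ← dot_factor, ← hD]
    calc c ⬝ᵥ M⁻¹ *ᵥ c ≤ norm2 c * norm2 (M⁻¹ *ᵥ c) := dot_le_norm2 _ _
    _ ≤ norm2 c * (specNorm M⁻¹ * norm2 c) := by
        exact mul_le_mul_of_nonneg_left (norm2_mulVec_le _ _) (norm2_nonneg _)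
    _ = specNorm M⁻¹ * (c ⬝ᵥ c) := by rw [norm2_sq_eq]; ring
  have h4 : (norm2 (D *ᵥ d))^2 = c ⬝ᵥ M *ᵥ c := by
    rw [sq_norm2, ← dot_factor, ← hD, h1, dotProduct_comm, hd]
  have h5 : (c ⬝ᵥ c)^2 ≤ (specNorm M⁻¹ * (c ⬝ᵥ c)) * (c ⬝ᵥ M *ᵥ c) := by
    calc (c ⬝ᵥ c)^2 = ((D *ᵥ c) ⬝ᵥ (D *ᵥ d))^2 := by rw [h2]
    _ ≤ (norm2 (D *ᵥ c) * norm2 (D *ᵥ d))^2 := by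
        exact sq_le_sq' (neg_dot_le_norm2 _ _) (dot_le_norm2 _ _)
    _ = (norm2 (D *ᵥ c))^2 * (norm2 (D *ᵥ d))^2 := by ring
    _ ≤ (specNorm M⁻¹ * (c ⬝ᵥ c)) * (c ⬝ᵥ M *ᵥ c) := by
        rw [h4]
        exact mul_le_mul_of_nonneg_right h3 hq
  rcases eq_or_lt_of_le (dot_self_nonneg c) with h0 | h0
  · rw [← h0]; positivity
  · have := h5
    rw [pow_two] at this
    nlinarith

lemma mulVec_eq_sum_cols (M : Matrix (Fin m) (Fin k) ℝ) (c : Fin k → ℝ) :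
    M *ᵥ c = ∑ j, c j • (fun r => M r j) := by
  funext r
  simp [mulVec, dotProduct, Finset.sum_apply, mul_comm]

end LocHelper


/-- Localization preserves the compression error: if the `A`-orthogonal
projection onto the column span of `Ψ` compresses with error `ε` and
`A_st = ΨᵀAΨ` satisfies `‖A_st⁻¹‖₂ ≤ ‖A⁻¹‖₂`, and `Ψ̃` has columns with
`‖ψ_i − ψ̃_i‖_A ≤ Cε/√N`, then the `A`-orthogonal projection `P^A_{Ψ̃}` onto the column
span of `Ψ̃` satisfies the stated error bounds. -/
theorem localized_compression_error {n N : ℕ}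
    (A : Matrix (Fin n) (Fin n) ℝ) (hA : A.PosDef)
    (Ψ : Matrix (Fin n) (Fin N) ℝ)
    (hΨind : LinearIndependent ℝ (fun j : Fin N => Ψᵀ j))
    (hAst : specNorm (Ψᵀ * A * Ψ)⁻¹ ≤ specNorm A⁻¹)
    (ε : ℝ) (hε : 0 < ε)
    (pΨ : (Fin n → ℝ) → (Fin n → ℝ))
    (hpΨ : ∀ x, pΨ x ∈ Submodule.span ℝ (Set.range fun j : Fin N => Ψᵀ j) ∧
      ∀ y ∈ Submodule.span ℝ (Set.range fun j : Fin N => Ψᵀ j),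
        (x - pΨ x) ⬝ᵥ A.mulVec y = 0)
    (happrox : ∀ x : Fin n → ℝ, normA A (x - pΨ x) ≤ ε * norm2 (A.mulVec x))
    (C : ℝ) (hC : 0 ≤ C)
    (Ψt : Matrix (Fin n) (Fin N) ℝ)
    (hclose : ∀ i : Fin N,
      normA A (fun r => Ψ r i - Ψt r i) ≤ C * ε / Real.sqrt N)
    (pΨt : (Fin n → ℝ) → (Fin n → ℝ))
    (hpΨt : ∀ x, pΨt x ∈ Submodule.span ℝ (Set.range fun j : Fin N => Ψtᵀ j) ∧
      ∀ y ∈ Submodule.span ℝ (Set.range fun j : Fin N => Ψtᵀ j),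
        (x - pΨt x) ⬝ᵥ A.mulVec y = 0) :
    (∀ x : Fin n → ℝ,
      normA A (x - pΨt x) ≤ (1 + C * specNorm A⁻¹) * ε * norm2 (A.mulVec x)) ∧
    (∀ x : Fin n → ℝ,
      norm2 (x - pΨt x) ≤ (1 + C * specNorm A⁻¹) ^ 2 * ε ^ 2 * norm2 (A.mulVec x)) ∧
    (∀ b : Fin n → ℝ,
      norm2 (A⁻¹.mulVec b - pΨt (A⁻¹.mulVec b)) ≤
        (1 + C * specNorm A⁻¹) ^ 2 * ε ^ 2 * norm2 b) := by
  classical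
  open LocHelper in
  -- factor A = Bᵀ B
  obtain ⟨B, hBfac⟩ := (by
    open scoped MatrixOrder in
    obtain ⟨D, hD⟩ := CStarAlgebra.nonneg_iff_eq_star_mul_self.mp hA.posSemidef.nonneg
    exact ⟨D, hD⟩ : ∃ D : Matrix (Fin n) (Fin n) ℝ, A = Dᴴ * D)
  rw [conjTranspose_eq_transpose_of_trivial] at hBfac
  set sN := specNorm A⁻¹ with hsN
  have hsN0 : 0 ≤ sN := LocHelper.specNorm_nonneg _
  set K := 1 + C * sN with hK
  have hK0 : (0:ℝ) ≤ K := by positivity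
  have hnormA : ∀ v, normA A v = norm2 (B *ᵥ v) := by
    intro v
    rw [normA, norm2, hBfac, LocHelper.dot_factor]
  have hnormA_nonneg : ∀ v, 0 ≤ normA A v := fun v => Real.sqrt_nonneg _
  have hdotA : ∀ u v : Fin n → ℝ, u ⬝ᵥ A *ᵥ v = (B *ᵥ u) ⬝ᵥ (B *ᵥ v) := by
    intro u v; rw [hBfac, LocHelper.dot_factor]
  have hdetA : IsUnit A.det := hA.det_pos.ne'.isUnit
  have hAAinv : ∀ v : Fin n → ℝ, A *ᵥ (A⁻¹ *ᵥ v) = v := by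
    intro v; rw [Matrix.mulVec_mulVec, Matrix.mul_nonsing_inv _ hdetA, Matrix.one_mulVec]
  have hAinvA : ∀ v : Fin n → ℝ, A⁻¹ *ᵥ (A *ᵥ v) = v := by
    intro v; rw [Matrix.mulVec_mulVec, Matrix.nonsing_inv_mul _ hdetA, Matrix.one_mulVec]
  -- triangle inequality for normA
  have htri : ∀ u v : Fin n → ℝ, normA A (u + v) ≤ normA A u + normA A v := by
    intro u v
    rw [hnormA, hnormA, hnormA, Matrix.mulVec_add]
    exact LocHelper.norm2_add_le _ _
  -- quasi-optimality of pΨt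
  have hopt : ∀ (x y : Fin n → ℝ),
      y ∈ Submodule.span ℝ (Set.range fun j : Fin N => Ψtᵀ j) →
      normA A (x - pΨt x) ≤ normA A (x - y) := by
    intro x y hy
    have horth : (x - pΨt x) ⬝ᵥ A *ᵥ (pΨt x - y) = 0 :=
      (hpΨt x).2 _ (Submodule.sub_mem _ (hpΨt x).1 hy)
    rw [hnormA, hnormA]
    have hsplit : x - y = (x - pΨt x) + (pΨt x - y) := by abel
    rw [hsplit, Matrix.mulVec_add]
    apply LocHelper.norm2_le_of_orth
    rw [← hdotA]; exact horth
  -- contraction of pΨ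
  have hcontr : ∀ x : Fin n → ℝ, normA A (pΨ x) ≤ normA A x := by
    intro x
    rw [hnormA, hnormA]
    have horth : (B *ᵥ pΨ x) ⬝ᵥ (B *ᵥ (x - pΨ x)) = 0 := by
      rw [dotProduct_comm, ← hdotA]
      exact (hpΨ x).2 _ (hpΨ x).1
    have h := LocHelper.norm2_le_of_orth horth
    have hcomb : pΨ x + (x - pΨ x) = x := by abel
    rwa [← Matrix.mulVec_add, hcomb] at h
  -- columns
  have hcols : ∀ j : Fin N, (fun r => Ψ r j) = Ψᵀ j := by
    intro j; funext r; simp [Matrix.transpose_apply]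
  have hcolst : ∀ j : Fin N, (fun r => Ψt r j) = Ψtᵀ j := by
    intro j; funext r; simp [Matrix.transpose_apply]
  -- linear independence → injectivity
  have hind : ∀ c : Fin N → ℝ, Ψ *ᵥ c = 0 → c = 0 := by
    intro c h
    have hsum : ∑ j, c j • (fun j : Fin N => Ψᵀ j) j = 0 := by
      simp only []
      rw [show (∑ j, c j • Ψᵀ j) = Ψ *ᵥ c by
        rw [LocHelper.mulVec_eq_sum_cols]; exact Finset.sum_congr rfl fun j _ => by rw [hcols]]
      exact h
    have := Fintype.linearIndependent_iff.mp hΨind c hsum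
    funext i; exact this i
  have hAst_pd : (Ψᵀ * A * Ψ).PosDef := LocHelper.posDef_conj A hA Ψ hind
  -- PART 1
  have part1 : ∀ x : Fin n → ℝ,
      normA A (x - pΨt x) ≤ K * ε * norm2 (A *ᵥ x) := by
    intro x
    set b := A *ᵥ x with hb
    obtain ⟨c, hc⟩ := (Submodule.mem_span_range_iff_exists_fun ℝ).mp (hpΨ x).1
    have hPx : Ψ *ᵥ c = pΨ x := by
      rw [LocHelper.mulVec_eq_sum_cols, Finset.sum_congr rfl fun j _ => by rw [hcols]]
      exact hc
    -- bound on norm2 c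
    have hxA2 : x ⬝ᵥ A *ᵥ x ≤ sN * (norm2 b * norm2 b) := by
      have hx' : x = A⁻¹ *ᵥ b := (hAinvA x).symm
      calc x ⬝ᵥ A *ᵥ x = (A⁻¹ *ᵥ b) ⬝ᵥ b := by rw [← hb, ← hx']
      _ ≤ norm2 (A⁻¹ *ᵥ b) * norm2 b := LocHelper.dot_le_norm2 _ _
      _ ≤ (sN * norm2 b) * norm2 b := by
          exact mul_le_mul_of_nonneg_right (LocHelper.norm2_mulVec_le _ _) (LocHelper.norm2_nonneg _)
      _ = sN * (norm2 b * norm2 b) := by ring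
    have hcb : norm2 c ≤ sN * norm2 b := by
      have h1 : c ⬝ᵥ c ≤ specNorm (Ψᵀ * A * Ψ)⁻¹ * (c ⬝ᵥ (Ψᵀ * A * Ψ) *ᵥ c) :=
        LocHelper.dot_le_specNorm_inv_mul _ hAst_pd c
      have h2 : c ⬝ᵥ (Ψᵀ * A * Ψ) *ᵥ c = (pΨ x) ⬝ᵥ A *ᵥ (pΨ x) := by
        rw [Matrix.mul_assoc, ← Matrix.mulVec_mulVec, LocHelper.dot_transpose,
          ← Matrix.mulVec_mulVec, hPx]
      have h3 : (pΨ x) ⬝ᵥ A *ᵥ (pΨ x) ≤ x ⬝ᵥ A *ᵥ x := by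
        have := hcontr x
        rw [hnormA, hnormA] at this
        have h4 := Real.sqrt_le_sqrt (le_of_eq (LocHelper.dot_factor B (pΨ x) (pΨ x)))
        calc (pΨ x) ⬝ᵥ A *ᵥ (pΨ x) = (B *ᵥ pΨ x) ⬝ᵥ (B *ᵥ pΨ x) := hdotA _ _
        _ = norm2 (B *ᵥ pΨ x) * norm2 (B *ᵥ pΨ x) := LocHelper.norm2_sq_eq _
        _ ≤ norm2 (B *ᵥ x) * norm2 (B *ᵥ x) :=
            mul_le_mul this this (LocHelper.norm2_nonneg _) (LocHelper.norm2_nonneg _)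
        _ = (B *ᵥ x) ⬝ᵥ (B *ᵥ x) := (LocHelper.norm2_sq_eq _).symm
        _ = x ⬝ᵥ A *ᵥ x := (hdotA _ _).symm
      have h5 : 0 ≤ (pΨ x) ⬝ᵥ A *ᵥ (pΨ x) := by
        rw [hdotA]; exact LocHelper.dot_self_nonneg _
      have h6 : c ⬝ᵥ c ≤ (sN * norm2 b) * (sN * norm2 b) := by
        calc c ⬝ᵥ c ≤ specNorm (Ψᵀ * A * Ψ)⁻¹ * ((pΨ x) ⬝ᵥ A *ᵥ (pΨ x)) := by rw [← h2]; exact h1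
        _ ≤ sN * ((pΨ x) ⬝ᵥ A *ᵥ (pΨ x)) := mul_le_mul_of_nonneg_right hAst h5
        _ ≤ sN * (x ⬝ᵥ A *ᵥ x) := mul_le_mul_of_nonneg_left h3 hsN0
        _ ≤ sN * (sN * (norm2 b * norm2 b)) := mul_le_mul_of_nonneg_left hxA2 hsN0
        _ = (sN * norm2 b) * (sN * norm2 b) := by ring
      have h7 : 0 ≤ sN * norm2 b := mul_nonneg hsN0 (LocHelper.norm2_nonneg _)
      calc norm2 c = Real.sqrt (c ⬝ᵥ c) := rfl
      _ ≤ Real.sqrt ((sN * norm2 b) * (sN * norm2 b)) := Real.sqrt_le_sqrt h6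
      _ = sN * norm2 b := by rw [Real.sqrt_mul_self h7]
    -- the perturbed columns error
    have hpert : normA A (Ψ *ᵥ c - Ψt *ᵥ c) ≤ C * ε * norm2 c := by
      have hrw : Ψ *ᵥ c - Ψt *ᵥ c = ∑ j, c j • (fun r => Ψ r j - Ψt r j) := by
        rw [← Matrix.sub_mulVec, LocHelper.mulVec_eq_sum_cols]
        exact Finset.sum_congr rfl fun j _ => by congr 1
      rw [hrw]
      have hBsum : B *ᵥ (∑ j, c j • (fun r => Ψ r j - Ψt r j)) =
          ∑ j, c j • (B *ᵥ (fun r => Ψ r j - Ψt r j)) := by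
        have h := map_sum B.mulVecLin (fun j => c j • (fun r => Ψ r j - Ψt r j)) Finset.univ
        simp only [Matrix.mulVecLin_apply, LinearMap.map_smul] at h
        exact h
      rw [hnormA, hBsum]
      calc norm2 (∑ j, c j • (B *ᵥ fun r => Ψ r j - Ψt r j))
          ≤ ∑ j, norm2 (c j • (B *ᵥ fun r => Ψ r j - Ψt r j)) :=
            LocHelper.norm2_sum_le _ _
      _ = ∑ j, |c j| * normA A (fun r => Ψ r j - Ψt r j) := by
            exact Finset.sum_congr rfl fun j _ => by rw [LocHelper.norm2_smul, hnormA]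
      _ ≤ ∑ j, |c j| * (C * ε / Real.sqrt N) := by
            exact Finset.sum_le_sum fun j _ =>
              mul_le_mul_of_nonneg_left (hclose j) (abs_nonneg _)
      _ = (C * ε / Real.sqrt N) * ∑ j, |c j| := by rw [← Finset.sum_mul]; ring
      _ ≤ (C * ε / Real.sqrt N) * (Real.sqrt N * norm2 c) := by
            apply mul_le_mul_of_nonneg_left _
              (div_nonneg (mul_nonneg hC hε.le) (Real.sqrt_nonneg _))
            -- ℓ¹–ℓ² bound
            have h := Real.sum_mul_le_sqrt_mul_sqrt Finset.univ
              (fun _ : Fin N => (1:ℝ)) (fun j => |c j|)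
            simp only [one_mul, one_pow, sq_abs] at h
            calc ∑ j, |c j| ≤ Real.sqrt (∑ _j : Fin N, (1:ℝ)) * Real.sqrt (∑ j, c j ^ 2) := h
            _ = Real.sqrt N * norm2 c := by
                congr 1
                · congr 1; simp
                · rw [norm2]; congr 1; rw [dotProduct]
                  exact Finset.sum_congr rfl fun j _ => (sq (c j)) ▸ (pow_two (c j))
      _ ≤ C * ε * norm2 c := by
            rcases eq_or_lt_of_le (Real.sqrt_nonneg (N:ℝ)) with h0 | h0
            · rw [← h0]
              have : C * ε / 0 * (0 * norm2 c) = 0 := by ring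
              rw [this]
              exact mul_nonneg (mul_nonneg hC hε.le) (LocHelper.norm2_nonneg c)
            · apply le_of_eq
              field_simp
    -- Ψt *ᵥ c is in the span
    have hmem : Ψt *ᵥ c ∈ Submodule.span ℝ (Set.range fun j : Fin N => Ψtᵀ j) := by
      rw [LocHelper.mulVec_eq_sum_cols]
      exact Submodule.sum_mem _ fun j _ => Submodule.smul_mem _ _
        (Submodule.subset_span ⟨j, (hcolst j).symm ▸ rfl⟩)
    calc normA A (x - pΨt x) ≤ normA A (x - Ψt *ᵥ c) := hopt x _ hmem
    _ = normA A ((x - pΨ x) + (pΨ x - Ψt *ᵥ c)) := by rw [sub_add_sub_cancel]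
    _ ≤ normA A (x - pΨ x) + normA A (pΨ x - Ψt *ᵥ c) := htri _ _
    _ ≤ ε * norm2 b + C * ε * norm2 c := by
        apply add_le_add (happrox x)
        rw [← hPx]; exact hpert
    _ ≤ ε * norm2 b + C * ε * (sN * norm2 b) := by
        apply add_le_add_right
        exact mul_le_mul_of_nonneg_left hcb (mul_nonneg hC hε.le)
    _ = K * ε * norm2 b := by rw [hK]; ring
  -- PART 2
  have part2 : ∀ x : Fin n → ℝ,
      norm2 (x - pΨt x) ≤ K ^ 2 * ε ^ 2 * norm2 (A *ᵥ x) := by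
    intro x
    have hz : A *ᵥ (A⁻¹ *ᵥ (x - pΨt x)) = x - pΨt x := hAAinv _
    have horth2 : (x - pΨt x) ⬝ᵥ A *ᵥ pΨt (A⁻¹ *ᵥ (x - pΨt x)) = 0 :=
      (hpΨt x).2 _ (hpΨt _).1
    have h1 : (x - pΨt x) ⬝ᵥ A *ᵥ ((A⁻¹ *ᵥ (x - pΨt x)) - pΨt (A⁻¹ *ᵥ (x - pΨt x)))
        = (x - pΨt x) ⬝ᵥ A *ᵥ (A⁻¹ *ᵥ (x - pΨt x))
          - (x - pΨt x) ⬝ᵥ A *ᵥ pΨt (A⁻¹ *ᵥ (x - pΨt x)) := by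
      rw [Matrix.mulVec_sub, dotProduct_sub]
    have hkey : (x - pΨt x) ⬝ᵥ (x - pΨt x)
        = (x - pΨt x) ⬝ᵥ A *ᵥ ((A⁻¹ *ᵥ (x - pΨt x)) - pΨt (A⁻¹ *ᵥ (x - pΨt x))) := by
      rw [h1, hz, horth2, sub_zero]
    have hCS : (x - pΨt x) ⬝ᵥ A *ᵥ ((A⁻¹ *ᵥ (x - pΨt x)) - pΨt (A⁻¹ *ᵥ (x - pΨt x)))
        ≤ normA A (x - pΨt x)
          * normA A ((A⁻¹ *ᵥ (x - pΨt x)) - pΨt (A⁻¹ *ᵥ (x - pΨt x))) := by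
      rw [hdotA, hnormA, hnormA]
      exact LocHelper.dot_le_norm2 _ _
    have hb1 : normA A (x - pΨt x) ≤ K * ε * norm2 (A *ᵥ x) := part1 x
    have hb2 : normA A ((A⁻¹ *ᵥ (x - pΨt x)) - pΨt (A⁻¹ *ᵥ (x - pΨt x)))
        ≤ K * ε * norm2 (x - pΨt x) := by
      have h := part1 (A⁻¹ *ᵥ (x - pΨt x))
      rwa [hz] at h
    have hmain : (x - pΨt x) ⬝ᵥ (x - pΨt x)
        ≤ (K ^ 2 * ε ^ 2 * norm2 (A *ᵥ x)) * norm2 (x - pΨt x) := by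
      calc (x - pΨt x) ⬝ᵥ (x - pΨt x)
          = (x - pΨt x) ⬝ᵥ A *ᵥ ((A⁻¹ *ᵥ (x - pΨt x)) - pΨt (A⁻¹ *ᵥ (x - pΨt x))) := hkey
      _ ≤ normA A (x - pΨt x)
            * normA A ((A⁻¹ *ᵥ (x - pΨt x)) - pΨt (A⁻¹ *ᵥ (x - pΨt x))) := hCS
      _ ≤ (K * ε * norm2 (A *ᵥ x)) * (K * ε * norm2 (x - pΨt x)) := by
          apply mul_le_mul hb1 hb2 (hnormA_nonneg _)
            (mul_nonneg (mul_nonneg hK0 hε.le) (LocHelper.norm2_nonneg _))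
      _ = (K ^ 2 * ε ^ 2 * norm2 (A *ᵥ x)) * norm2 (x - pΨt x) := by ring
    rcases eq_or_lt_of_le (LocHelper.norm2_nonneg (x - pΨt x)) with h0 | h0
    · rw [← h0]
      exact mul_nonneg (mul_nonneg (pow_nonneg hK0 2) (pow_nonneg hε.le 2))
        (LocHelper.norm2_nonneg _)
    · rw [LocHelper.norm2_sq_eq] at hmain
      exact le_of_mul_le_mul_right hmain h0
  refine ⟨part1, part2, ?_⟩
  intro b
  have := part2 (A⁻¹ *ᵥ b)
  rwa [hAAinv b] at this
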